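/- (Per-dimension reachable set.) Fix a dimension i with a_minⁱ < a_prevⁱ < a_maxⁱ, and write R⁺ = min(δⁱ, a_maxⁱ − a_prevⁱ) > 0 and R⁻ = min(δⁱ, a_prevⁱ − a_minⁱ) > 0. Then the image of the per-dimension DD-SRad map g(v) = a_prevⁱ + R_eff^i(v)·f(v), as v ranges over ℝ, is exactly the open interval (a_prevⁱ − R⁻, a_prevⁱ + R⁺). -/

import Mathlib

/-- The squashing function `f(t) = t / √(1 + t²)`. -/
noncomputable def squash (t : ℝ) : ℝ := t / Real.sqrt (1 + t ^ 2)

/-- The per-dimension effective radius of DD-SRad. -/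
noncomputable def Reff (δ amin amax aprev u : ℝ) : ℝ :=
  if 0 < u then min δ (amax - aprev)
  else if u < 0 then min δ (aprev - amin)
  else δ

lemma sqrt_one_add_sq_pos (t : ℝ) : 0 < Real.sqrt (1 + t ^ 2) :=
  Real.sqrt_pos.mpr (by positivity)

lemma squash_lt_one (t : ℝ) : squash t < 1 := by
  unfold squash
  rw [div_lt_one (sqrt_one_add_sq_pos t)]
  calc t ≤ |t| := le_abs_self t
    _ = Real.sqrt (t ^ 2) := (Real.sqrt_sq_eq_abs t).symm
    _ < Real.sqrt (1 + t ^ 2) := Real.sqrt_lt_sqrt (by positivity) (by linarith)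

lemma squash_neg (t : ℝ) : squash (-t) = - squash t := by
  simp [squash, neg_div]

lemma neg_one_lt_squash (t : ℝ) : -1 < squash t := by
  have h := squash_lt_one (-t)
  rw [squash_neg] at h
  linarith

lemma squash_pos {t : ℝ} (ht : 0 < t) : 0 < squash t :=
  div_pos ht (sqrt_one_add_sq_pos t)

lemma squash_zero : squash 0 = 0 := by simp [squash]

lemma squash_surj {y : ℝ} (h1 : -1 < y) (h2 : y < 1) :
    squash (y / Real.sqrt (1 - y ^ 2)) = y := by
  have hy2 : 0 < 1 - y ^ 2 := by nlinarith
  set s := Real.sqrt (1 - y ^ 2) with hs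
  have hs0 : 0 < s := Real.sqrt_pos.mpr hy2
  have hs2 : s ^ 2 = 1 - y ^ 2 := Real.sq_sqrt hy2.le
  unfold squash
  have : 1 + (y / s) ^ 2 = (1 / s) ^ 2 := by
    field_simp
    nlinarith
  rw [this, Real.sqrt_sq (by positivity)]
  field_simp

/-- Per-dimension reachable set: for an interior previous action
`amin < aprev < amax`, the image of the per-dimension DD-SRad map
`g(v) = aprev + Reff(v)·f(v)` over `v ∈ ℝ` is exactly the open interval
`(aprev − R⁻, aprev + R⁺)`, where `R⁺ = min(δ, amax − aprev)` and
`R⁻ = min(δ, aprev − amin)`. -/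
theorem ddsrad_range (δ amin amax aprev : ℝ) (hδ : 0 < δ)
    (h₁ : amin < aprev) (h₂ : aprev < amax) :
    Set.range (fun v => aprev + Reff δ amin amax aprev v * squash v) =
      Set.Ioo (aprev - min δ (aprev - amin)) (aprev + min δ (amax - aprev)) := by
  set Rm := min δ (aprev - amin) with hRm
  set Rp := min δ (amax - aprev) with hRp
  have hRm0 : 0 < Rm := lt_min hδ (by linarith)
  have hRp0 : 0 < Rp := lt_min hδ (by linarith)
  ext x
  simp only [Set.mem_range, Set.mem_Ioo]
  constructor
  · rintro ⟨v, rfl⟩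
    rcases lt_trichotomy v 0 with hv | hv | hv
    · have hR : Reff δ amin amax aprev v = Rm := by
        simp [Reff, not_lt.mpr hv.le, hv, hRm]
      have hsq1 : -1 < squash v := neg_one_lt_squash v
      have hsq2 : squash v < 0 := by
        have := squash_pos (t := -v) (by linarith)
        rw [squash_neg] at this; linarith
      rw [hR]
      constructor
      · nlinarith
      · nlinarith
    · subst hv
      rw [squash_zero]
      constructor <;> simp <;> linarith
    · have hR : Reff δ amin amax aprev v = Rp := by simp [Reff, hv, hRp]
      have hsq1 : 0 < squash v := squash_pos hv
      have hsq2 : squash v < 1 := squash_lt_one v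
      rw [hR]
      constructor
      · nlinarith
      · nlinarith
  · rintro ⟨hx1, hx2⟩
    rcases lt_trichotomy x aprev with hx | hx | hx
    · set y := (x - aprev) / Rm with hy
      have hy1 : -1 < y := by
        rw [hy, neg_lt, ← neg_div, neg_sub]
        rw [div_lt_one hRm0]; linarith
      have hy2 : y < 0 := div_neg_of_neg_of_pos (by linarith) hRm0
      set v := y / Real.sqrt (1 - y ^ 2) with hv
      have hvneg : v < 0 := div_neg_of_neg_of_pos hy2 (Real.sqrt_pos.mpr (by nlinarith))
      refine ⟨v, ?_⟩
      have hR : Reff δ amin amax aprev v = Rm := by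
        simp [Reff, not_lt.mpr hvneg.le, hvneg, hRm]
      rw [hR, hv, squash_surj hy1 (by linarith), hy]
      field_simp
      ring
    · exact ⟨0, by simpa [Reff, squash_zero] using hx.symm⟩
    · set y := (x - aprev) / Rp with hy
      have hy1 : y < 1 := by rw [hy, div_lt_one hRp0]; linarith
      have hy2 : 0 < y := div_pos (by linarith) hRp0
      set v := y / Real.sqrt (1 - y ^ 2) with hv
      have hvpos : 0 < v := div_pos hy2 (Real.sqrt_pos.mpr (by nlinarith))
      refine ⟨v, ?_⟩
      have hR : Reff δ amin amax aprev v = Rp := by simp [Reff, hvpos, hRp]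
      rw [hR, hv, squash_surj (by linarith) hy1, hy]
      field_simp
      ring
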